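/- arXiv:2412.15665 — 3 statements merged into one kernel-verified Lean document; each statement's English description precedes it below -/
import Mathlib

section
/- In the RCC separation QUBO model with penalty factor P > 1, every binary vector (x,w) with C₂^RCC(x,w) > 0 is not optimal: there exists (x',w') with C^RCC(x',w') < C^RCC(x,w). Consequently every optimal solution of the QUBO satisfies C₂^RCC = 0. -/
/-- RCC separation QUBO: with penalty factor `P > 1`, any binary vector `(x, w)` with
positive penalty `C₂` is not optimal — there is a binary `(x', w')` with strictly
smaller cost — and consequently every optimal binary solution has zero penalty. -/
theorem rcc_qubo_penalty (n : ℕ) (ι : Type) [Fintype ι]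
    (route : ι → Finset (Fin n)) (y : ι → ℝ) (hy : ∀ r, 0 < y r ∧ y r ≤ 1)
    (d : Fin n → ℝ) (C : ℝ) (hC : 0 < C) (P : ℝ) (hP : P > 1) :
    (∀ x : Fin n → ℝ, ∀ w : ι → ℝ,
      (∀ i, x i = 0 ∨ x i = 1) → (∀ r, w r = 0 ∨ w r = 1) →
      (∑ r : ι, ∑ i ∈ route r, (x i - w r * x i)) > 0 →
      ∃ x' : Fin n → ℝ, ∃ w' : ι → ℝ,
        (∀ i, x' i = 0 ∨ x' i = 1) ∧ (∀ r, w' r = 0 ∨ w' r = 1) ∧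
        ((∑ r : ι, y r * w' r) - (1 / C) * ∑ i : Fin n, d i * x' i
            + P * ∑ r : ι, ∑ i ∈ route r, (x' i - w' r * x' i))
          < ((∑ r : ι, y r * w r) - (1 / C) * ∑ i : Fin n, d i * x i
            + P * ∑ r : ι, ∑ i ∈ route r, (x i - w r * x i))) ∧
    (∀ x : Fin n → ℝ, ∀ w : ι → ℝ,
      (∀ i, x i = 0 ∨ x i = 1) → (∀ r, w r = 0 ∨ w r = 1) →
      (∀ x' : Fin n → ℝ, ∀ w' : ι → ℝ,
        (∀ i, x' i = 0 ∨ x' i = 1) → (∀ r, w' r = 0 ∨ w' r = 1) →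
        ((∑ r : ι, y r * w r) - (1 / C) * ∑ i : Fin n, d i * x i
            + P * ∑ r : ι, ∑ i ∈ route r, (x i - w r * x i))
          ≤ ((∑ r : ι, y r * w' r) - (1 / C) * ∑ i : Fin n, d i * x' i
            + P * ∑ r : ι, ∑ i ∈ route r, (x' i - w' r * x' i))) →
      (∑ r : ι, ∑ i ∈ route r, (x i - w r * x i)) = 0) := by
  classical
  have key : ∀ x : Fin n → ℝ, ∀ w : ι → ℝ,
      (∀ i, x i = 0 ∨ x i = 1) → (∀ r, w r = 0 ∨ w r = 1) →
      (∑ r : ι, ∑ i ∈ route r, (x i - w r * x i)) > 0 →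
      ∃ x' : Fin n → ℝ, ∃ w' : ι → ℝ,
        (∀ i, x' i = 0 ∨ x' i = 1) ∧ (∀ r, w' r = 0 ∨ w' r = 1) ∧
        ((∑ r : ι, y r * w' r) - (1 / C) * ∑ i : Fin n, d i * x' i
            + P * ∑ r : ι, ∑ i ∈ route r, (x' i - w' r * x' i))
          < ((∑ r : ι, y r * w r) - (1 / C) * ∑ i : Fin n, d i * x i
            + P * ∑ r : ι, ∑ i ∈ route r, (x i - w r * x i)) := by
    intro x w hx hw hpos
    set S : ι → ℝ := fun r => ∑ i ∈ route r, (x i - w r * x i) with hS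
    have hSnn : ∀ r, 0 ≤ S r := by
      intro r
      apply Finset.sum_nonneg
      intro i _
      rcases hx i with h | h <;> rcases hw r with h' | h' <;> simp [h, h']
    obtain ⟨r, hr⟩ : ∃ r, 0 < S r := by
      by_contra h
      push_neg at h
      have : (∑ r : ι, S r) ≤ 0 := Finset.sum_nonpos fun r _ => h r
      exact absurd hpos (not_lt.mpr this)
    have hwr : w r = 0 := by
      rcases hw r with h | h
      · exact h
      · exfalso
        have : S r = 0 := by simp [hS, h]
        simp [this] at hr
    -- S r ≥ 1
    have hSr1 : 1 ≤ S r := by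
      have hSr : S r = ∑ i ∈ route r, x i := by
        simp [hS, hwr]
      obtain ⟨i, hi, hxi⟩ : ∃ i ∈ route r, 0 < x i := by
        by_contra h
        push_neg at h
        have : S r ≤ 0 := by
          rw [hSr]
          exact Finset.sum_nonpos fun i hi => h i hi
        exact absurd hr (not_lt.mpr this)
      have hxi1 : x i = 1 := by
        rcases hx i with h | h
        · simp [h] at hxi
        · exact h
      rw [hSr]
      calc (1 : ℝ) = x i := hxi1.symm
        _ ≤ ∑ i ∈ route r, x i := Finset.single_le_sum
            (fun j _ => by rcases hx j with h | h <;> simp [h]) hi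
    refine ⟨x, Function.update w r 1, hx, ?_, ?_⟩
    · intro r'
      rcases eq_or_ne r' r with h | h
      · subst h; simp
      · simpa [Function.update_of_ne h] using hw r'
    · have h1 : (∑ r' : ι, y r' * Function.update w r 1 r')
          = (∑ r' : ι, y r' * w r') + y r := by
        rw [← Finset.sum_add_sum_compl {r}, ← Finset.sum_add_sum_compl {r}
          (f := fun r' => y r' * w r')]
        have : ∀ r' ∈ ({r}ᶜ : Finset ι), y r' * Function.update w r 1 r'
            = y r' * w r' := by
          intro r' hr'
          simp only [Finset.mem_compl, Finset.mem_singleton] at hr'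
          rw [Function.update_of_ne hr']
        rw [Finset.sum_congr rfl this]
        simp [hwr]
        ring
      have h2 : (∑ r' : ι, ∑ i ∈ route r', (x i - Function.update w r 1 r' * x i))
          = (∑ r' : ι, S r') - S r := by
        rw [← Finset.sum_add_sum_compl {r}, ← Finset.sum_add_sum_compl {r}
          (f := S)]
        have : ∀ r' ∈ ({r}ᶜ : Finset ι),
            (∑ i ∈ route r', (x i - Function.update w r 1 r' * x i)) = S r' := by
          intro r' hr'
          simp only [Finset.mem_compl, Finset.mem_singleton] at hr'
          rw [hS]
          simp only [Function.update_of_ne hr']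
        rw [Finset.sum_congr rfl this]
        simp
      rw [h1, h2]
      have hyP : y r + P * ((∑ r' : ι, S r') - S r) < P * ∑ r' : ι, S r' := by
        have hP0 : 0 < P := lt_trans one_pos hP
        have : y r < P * S r := by
          calc y r ≤ 1 := (hy r).2
            _ < P := hP
            _ = P * 1 := (mul_one P).symm
            _ ≤ P * S r := by
              apply mul_le_mul_of_nonneg_left hSr1 (le_of_lt hP0)
        nlinarith
      have : (∑ r' : ι, ∑ i ∈ route r', (x i - w r' * x i)) = ∑ r' : ι, S r' := rfl
      rw [this]
      linarith
  constructor
  · exact key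
  · intro x w hx hw hopt
    have hSnn : (0 : ℝ) ≤ ∑ r : ι, ∑ i ∈ route r, (x i - w r * x i) := by
      apply Finset.sum_nonneg
      intro r _
      apply Finset.sum_nonneg
      intro i _
      rcases hx i with h | h <;> rcases hw r with h' | h' <;> simp [h, h']
    rcases eq_or_lt_of_le hSnn with h | h
    · exact h.symm
    · exfalso
      obtain ⟨x', w', hx', hw', hlt⟩ := key x w hx hw h
      exact absurd (hopt x' w' hx' hw') (not_le.mpr hlt)
end

section
/- The rounded capacity cut is valid: for any feasible integral solution y ∈ {0,1}^R of the set cover model of the CVRP and any nonempty customer subset S ⊆ V, the number of routes r with y_r = 1 and r ∩ S ≠ ∅ is at least ⌈D(S)/K⌉, where D(S) = ∑_{i∈S} d_i. -/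
/-- Validity of rounded capacity cuts: in a feasible integral set-cover solution of
the CVRP (given by the finite set `Rsel` of selected routes, each respecting the
capacity, together covering all customers), for any nonempty customer subset `S`
the number of selected routes intersecting `S` is at least `⌈D(S)/K⌉`. -/
theorem rounded_capacity_cut_valid (n : ℕ)
    (d : Fin n → ℝ) (hd : ∀ i, 0 < d i) (K : ℝ) (hK : 0 < K)
    (Rsel : Finset (Finset (Fin n)))
    (hcap : ∀ r ∈ Rsel, ∑ i ∈ r, d i ≤ K)
    (hcover : ∀ i : Fin n, ∃ r ∈ Rsel, i ∈ r)
    (S : Finset (Fin n)) (hS : S.Nonempty) :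
    ⌈(∑ i ∈ S, d i) / K⌉ ≤
      ((Rsel.filter (fun r => (r ∩ S).Nonempty)).card : ℤ) := by
  set F := Rsel.filter (fun r => (r ∩ S).Nonempty) with hF
  rw [Int.ceil_le]
  push_cast
  rw [div_le_iff₀ hK]
  have key : ∑ i ∈ S, d i ≤ ∑ r ∈ F, ∑ i ∈ r ∩ S, d i := by
    have : ∀ r, ∑ i ∈ r ∩ S, d i = ∑ i ∈ S, if i ∈ r then d i else 0 := by
      intro r
      rw [Finset.inter_comm, Finset.sum_ite_mem, Finset.inter_comm]
    simp_rw [this]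
    rw [Finset.sum_comm]
    apply Finset.sum_le_sum
    intro i hi
    obtain ⟨r, hr, hir⟩ := hcover i
    have hrF : r ∈ F := by
      rw [hF, Finset.mem_filter]
      exact ⟨hr, ⟨i, Finset.mem_inter.2 ⟨hir, hi⟩⟩⟩
    calc d i = if i ∈ r then d i else 0 := by simp [hir]
      _ ≤ ∑ r' ∈ F, if i ∈ r' then d i else 0 := by
          apply Finset.single_le_sum (f := fun r' => if i ∈ r' then d i else 0) _ hrF
          intro r' _
          show 0 ≤ (if i ∈ r' then d i else 0); split <;> simp [(hd i).le]
      _ = _ := rfl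
  refine key.trans ?_
  calc ∑ r ∈ F, ∑ i ∈ r ∩ S, d i ≤ ∑ r ∈ F, K := by
        apply Finset.sum_le_sum
        intro r hr
        have hrR : r ∈ Rsel := (Finset.mem_filter.1 hr).1
        refine le_trans ?_ (hcap r hrR)
        exact Finset.sum_le_sum_of_subset_of_nonneg (Finset.inter_subset_left)
          (fun i _ _ => (hd i).le)
    _ = F.card * K := by rw [Finset.sum_const, nsmul_eq_mul]
end

section
/- A sufficient penalty for the TSP QUBO: if P > T_n, where T_n is the sum of the n largest distances t_uv, then every infeasible binary assignment x (one violating at least one of the row/column-sum-equals-one conditions) has strictly larger cost C^TSP(x) than every feasible assignment. -/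
open Finset

lemma binary_sum_card {n : ℕ} (g : Fin n → ℝ) (hb : ∀ u, g u = 0 ∨ g u = 1) :
    ∑ u, g u = ((univ.filter (fun u => g u = 1)).card : ℝ) := by
  rw [← Finset.sum_filter_add_sum_filter_not univ (fun u => g u = 1)]
  have h1 : ∑ u ∈ univ.filter (fun u => g u = 1), g u
      = ((univ.filter (fun u => g u = 1)).card : ℝ) := by
    rw [Finset.sum_congr rfl (fun u hu => (Finset.mem_filter.mp hu).2)]
    simp
  have h2 : ∑ u ∈ univ.filter (fun u => ¬ g u = 1), g u = 0 := by
    apply Finset.sum_eq_zero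
    intro u hu
    rcases hb u with h | h
    · exact h
    · exact absurd h (Finset.mem_filter.mp hu).2
  rw [h1, h2, add_zero]

lemma binary_sum_one {n : ℕ} (g : Fin n → ℝ) (hb : ∀ u, g u = 0 ∨ g u = 1)
    (hs : ∑ u, g u = 1) : ∃ u, g u = 1 ∧ ∀ v, v ≠ u → g v = 0 := by
  have hc := binary_sum_card g hb
  rw [hs] at hc
  have : (univ.filter (fun u => g u = 1)).card = 1 := by exact_mod_cast hc.symm
  obtain ⟨u, hu⟩ := Finset.card_eq_one.mp this
  refine ⟨u, ?_, ?_⟩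
  · have : u ∈ univ.filter (fun u => g u = 1) := hu ▸ Finset.mem_singleton_self u
    exact (Finset.mem_filter.mp this).2
  · intro v hv
    rcases hb v with h | h
    · exact h
    · exfalso
      have : v ∈ univ.filter (fun u => g u = 1) := Finset.mem_filter.mpr ⟨Finset.mem_univ v, h⟩
      rw [hu, Finset.mem_singleton] at this
      exact hv this

lemma binary_sum_ne_one {n : ℕ} (g : Fin n → ℝ) (hb : ∀ u, g u = 0 ∨ g u = 1)
    (hs : ∑ u, g u ≠ 1) : 1 ≤ (1 - ∑ u, g u) ^ 2 := by
  have hc := binary_sum_card g hb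
  set m := (univ.filter (fun u => g u = 1)).card with hm
  rw [hc] at hs ⊢
  have hz : (1 : ℤ) - (m : ℤ) ≠ 0 := by
    intro h
    apply hs
    have hm1 : m = 1 := by omega
    rw [hm1]; norm_num
  have : (1 : ℤ) ≤ |1 - (m : ℤ)| := Int.one_le_abs hz
  have habs : (1 : ℝ) ≤ |1 - (m : ℝ)| := by
    have h2 : ((1:ℤ):ℝ) ≤ (|1 - (m : ℤ)| : ℝ) := by exact_mod_cast this
    simpa [abs_sub_comm] using h2
  calc (1:ℝ) = 1 ^ 2 := by ring
  _ ≤ |1 - (m:ℝ)| ^ 2 := by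
      apply pow_le_pow_left₀ (by norm_num) habs
  _ = (1 - (m:ℝ)) ^ 2 := sq_abs _

/-- Sufficient penalty for the TSP QUBO: if `P > Tₙ`, where `Tₙ` is the sum of the
`n` largest distances, then every infeasible binary assignment has strictly larger
cost `C^TSP` than every feasible one. -/
theorem tsp_penalty_sufficient (n : ℕ) [NeZero n]
    (t : Fin n → Fin n → ℝ) (ht : ∀ u v, 0 < t u v)
    (T : ℝ)
    (hT : IsGreatest {s : ℝ | ∃ S : Finset (Fin n × Fin n),
        S.card = n ∧ s = ∑ p ∈ S, t p.1 p.2} T)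
    (P : ℝ) (hP : P > T)
    (x x' : Fin n → Fin n → ℝ)
    (hx : ∀ v i, x v i = 0 ∨ x v i = 1)
    (hx' : ∀ v i, x' v i = 0 ∨ x' v i = 1)
    (hinfeas : ¬ ((∀ v : Fin n, ∑ i : Fin n, x v i = 1) ∧
        (∀ i : Fin n, ∑ v : Fin n, x v i = 1)))
    (hfeas : (∀ v : Fin n, ∑ i : Fin n, x' v i = 1) ∧
        (∀ i : Fin n, ∑ v : Fin n, x' v i = 1)) :
    (∑ u : Fin n, ∑ v : Fin n, t u v * ∑ i : Fin n, x' u i * x' v (i + 1))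
        + P * ∑ v : Fin n, (1 - ∑ i : Fin n, x' v i) ^ 2
        + P * ∑ i : Fin n, (1 - ∑ v : Fin n, x' v i) ^ 2
      < (∑ u : Fin n, ∑ v : Fin n, t u v * ∑ i : Fin n, x u i * x v (i + 1))
        + P * ∑ v : Fin n, (1 - ∑ i : Fin n, x v i) ^ 2
        + P * ∑ i : Fin n, (1 - ∑ v : Fin n, x v i) ^ 2 := by
  obtain ⟨hrow, hcol⟩ := hfeas
  -- T > 0, hence P > 0
  have hn : 0 < n := Nat.pos_of_ne_zero (NeZero.ne n)
  have hT0 : 0 < T := by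
    obtain ⟨S0, hS0c, hS0s⟩ := hT.1
    have hne : S0.Nonempty := Finset.card_pos.mp (by rw [hS0c]; exact hn)
    rw [hS0s]
    exact Finset.sum_pos (fun p _ => ht p.1 p.2) hne
  have hP0 : 0 < P := lt_trans hT0 hP
  -- select city at each position for the feasible tour
  choose f hf1 hf0 using fun i => binary_sum_one (fun v => x' v i) (fun v => hx' v i) (hcol i)
  -- f is injective
  have hfinj : Function.Injective f := by
    intro i j hij
    obtain ⟨k, _, hk0⟩ := binary_sum_one (fun j => x' (f i) j) (fun j => hx' (f i) j) (hrow (f i))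
    have hi : i = k := by
      by_contra h
      have := hk0 i h
      rw [hf1 i] at this
      norm_num at this
    have hj : j = k := by
      by_contra h
      have := hk0 j h
      rw [hij, hf1 j] at this
      norm_num at this
    rw [hi, hj]
  -- the feasible tour term equals a sum of n distances
  have inner : ∀ i : Fin n, ∑ u : Fin n, ∑ v : Fin n, t u v * (x' u i * x' v (i + 1))
      = t (f i) (f (i + 1)) := by
    intro i
    rw [Finset.sum_eq_single (f i)]
    · rw [hf1 i]
      rw [Finset.sum_eq_single (f (i + 1))]
      · rw [hf1 (i + 1)]; ring
      · intro v _ hv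
        rw [hf0 (i + 1) v hv]; ring
      · intro h; exact absurd (Finset.mem_univ _) h
    · intro u _ hu
      apply Finset.sum_eq_zero
      intro v _
      rw [hf0 i u hu]; ring
    · intro h; exact absurd (Finset.mem_univ _) h
  have key : (∑ u : Fin n, ∑ v : Fin n, t u v * ∑ i : Fin n, x' u i * x' v (i + 1))
      = ∑ i : Fin n, t (f i) (f (i + 1)) := by
    have : (∑ u : Fin n, ∑ v : Fin n, t u v * ∑ i : Fin n, x' u i * x' v (i + 1))
        = ∑ u : Fin n, ∑ i : Fin n, ∑ v : Fin n, t u v * (x' u i * x' v (i + 1)) := by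
      apply Finset.sum_congr rfl
      intro u _
      simp_rw [Finset.mul_sum]
      exact Finset.sum_comm
    rw [this, Finset.sum_comm]
    exact Finset.sum_congr rfl (fun i _ => inner i)
  -- bound by T
  have hbound : ∑ i : Fin n, t (f i) (f (i + 1)) ≤ T := by
    apply hT.2
    refine ⟨Finset.image (fun i => (f i, f (i + 1))) univ, ?_, ?_⟩
    · rw [Finset.card_image_of_injective]
      · simp
      · intro i j h
        exact hfinj (congrArg Prod.fst h)
    · rw [Finset.sum_image]
      intro i _ j _ h
      exact hfinj (congrArg Prod.fst h)
  -- feasible penalties are zero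
  have hpen1 : ∑ v : Fin n, (1 - ∑ i : Fin n, x' v i) ^ 2 = 0 := by
    apply Finset.sum_eq_zero; intro v _; rw [hrow v]; ring
  have hpen2 : ∑ i : Fin n, (1 - ∑ v : Fin n, x' v i) ^ 2 = 0 := by
    apply Finset.sum_eq_zero; intro i _; rw [hcol i]; ring
  -- infeasible side ≥ P
  have hxnn : ∀ v i, 0 ≤ x v i := by
    intro v i; rcases hx v i with h | h <;> rw [h] <;> norm_num
  have htour : 0 ≤ ∑ u : Fin n, ∑ v : Fin n, t u v * ∑ i : Fin n, x u i * x v (i + 1) :=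
    Finset.sum_nonneg fun u _ => Finset.sum_nonneg fun v _ => mul_nonneg (ht u v).le
      (Finset.sum_nonneg fun i _ => mul_nonneg (hxnn u i) (hxnn v (i + 1)))
  have hsq1 : 0 ≤ ∑ v : Fin n, (1 - ∑ i : Fin n, x v i) ^ 2 :=
    Finset.sum_nonneg fun v _ => sq_nonneg _
  have hsq2 : 0 ≤ ∑ i : Fin n, (1 - ∑ v : Fin n, x v i) ^ 2 :=
    Finset.sum_nonneg fun i _ => sq_nonneg _
  have hviol : 1 ≤ ∑ v : Fin n, (1 - ∑ i : Fin n, x v i) ^ 2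
      ∨ 1 ≤ ∑ i : Fin n, (1 - ∑ v : Fin n, x v i) ^ 2 := by
    rw [not_and_or] at hinfeas
    rcases hinfeas with h | h
    · left
      push_neg at h
      obtain ⟨v0, hv0⟩ := h
      calc (1:ℝ) ≤ (1 - ∑ i : Fin n, x v0 i) ^ 2 :=
            binary_sum_ne_one (fun i => x v0 i) (fun i => hx v0 i) hv0
      _ ≤ ∑ v : Fin n, (1 - ∑ i : Fin n, x v i) ^ 2 :=
            Finset.single_le_sum (f := fun v => (1 - ∑ i : Fin n, x v i) ^ 2) (fun v _ => sq_nonneg _) (Finset.mem_univ v0)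
    · right
      push_neg at h
      obtain ⟨i0, hi0⟩ := h
      calc (1:ℝ) ≤ (1 - ∑ v : Fin n, x v i0) ^ 2 :=
            binary_sum_ne_one (fun v => x v i0) (fun v => hx v i0) hi0
      _ ≤ ∑ i : Fin n, (1 - ∑ v : Fin n, x v i) ^ 2 :=
            Finset.single_le_sum (f := fun i => (1 - ∑ v : Fin n, x v i) ^ 2) (fun i _ => sq_nonneg _) (Finset.mem_univ i0)
  rw [key, hpen1, hpen2]
  have hlhs : ∑ i : Fin n, t (f i) (f (i + 1)) + P * 0 + P * 0 ≤ T := by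
    simpa using hbound
  rcases hviol with h | h
  · have h1 : P ≤ P * ∑ v : Fin n, (1 - ∑ i : Fin n, x v i) ^ 2 := by
      nlinarith
    have h2 : 0 ≤ P * ∑ i : Fin n, (1 - ∑ v : Fin n, x v i) ^ 2 := mul_nonneg hP0.le hsq2
    linarith
  · have h1 : P ≤ P * ∑ i : Fin n, (1 - ∑ v : Fin n, x v i) ^ 2 := by
      nlinarith
    have h2 : 0 ≤ P * ∑ v : Fin n, (1 - ∑ i : Fin n, x v i) ^ 2 := mul_nonneg hP0.le hsq1
    linarith
end
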